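/- arXiv:1501.01161 — 4 statements merged into one kernel-verified Lean document; each statement's English description precedes it below -/
import Mathlib

section
/- For f ∈ H̄²'⁰ and a polynomial q_n of degree at most n with all roots in the open unit disk, the function q̃_n · P₊(f q_n / q̃_n) is a polynomial of degree at most n−1, where q̃_n(z) = zⁿ · conj(q_n(1/z̄)) and P₊ is the analytic Riesz projection. -/
open MeasureTheory Complex Real Polynomial

noncomputable section

/-- Boundary trace on the unit circle: `θ ↦ f (e^{iθ})`. -/
def tr (f : ℂ → ℂ) : ℝ → ℂ := fun θ => f (Complex.exp ((θ : ℂ) * Complex.I))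

/-- Arclength measure on one period of the circle. -/
def μc : Measure ℝ := volume.restrict (Set.Ioc 0 (2 * π))

/-- `k`-th Fourier coefficient of the boundary values of `f`. -/
def fc (f : ℂ → ℂ) (k : ℤ) : ℂ :=
  (2 * π : ℂ)⁻¹ * ∫ θ, Complex.exp (-(k : ℂ) * (θ : ℂ) * Complex.I) * tr f θ ∂μc

/-- Squared (normalized) L²(𝕋) norm of the boundary values of `f`. -/
def l2sq (f : ℂ → ℂ) : ℝ := (2 * π)⁻¹ * ∫ θ, ‖tr f θ‖ ^ 2 ∂μc

/-- (Normalized) L²(𝕋) norm of the boundary values of `f`. -/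
def l2 (f : ℂ → ℂ) : ℝ := Real.sqrt (l2sq f)

/-- `f` has square-integrable boundary values on the circle. -/
def MemL2circ (f : ℂ → ℂ) : Prop := MemLp (tr f) 2 μc

/-- `‖P₋ g‖₂`, the L² norm of the anti-analytic projection, via Parseval:
the square root of the sum of the squared moduli of the negative-index
Fourier coefficients. -/
def normPminus (g : ℂ → ℂ) : ℝ := Real.sqrt (∑' k : ℕ, ‖fc g (-(k : ℤ) - 1)‖ ^ 2)

/-- Reciprocal polynomial `q̃(z) = zⁿ conj (q (1/z̄))` of `q` in degree `n`. -/
def recip (n : ℕ) (q : Polynomial ℂ) : Polynomial ℂ := (q.map (starRingEnd ℂ)).reflect n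

/-- L²(𝕋) distance from `f` to a set `S` of functions. -/
def d2circ (f : ℂ → ℂ) (S : Set (ℂ → ℂ)) : ℝ :=
  sInf {x | ∃ r ∈ S, x = l2 (fun z => f z - r z)}

/-- Membership in H², expressed through boundary values: square-integrable with
vanishing negative Fourier coefficients. -/
def inH2 (v : ℂ → ℂ) : Prop := MemL2circ v ∧ ∀ k : ℤ, k < 0 → fc v k = 0

/-- (Normalized) L²(𝕋) inner product of boundary values. -/
def innerC (u v : ℂ → ℂ) : ℂ :=
  (2 * π : ℂ)⁻¹ * ∫ θ, tr u θ * (starRingEnd ℂ) (tr v θ) ∂μc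

/-- The analytic Riesz projection, as a Cauchy integral, evaluated at a point of
the open unit disk. -/
def Pplus (g : ℂ → ℂ) (z : ℂ) : ℂ :=
  (2 * π : ℂ)⁻¹ * ∫ θ,
    (Complex.exp ((θ : ℂ) * Complex.I) / (Complex.exp ((θ : ℂ) * Complex.I) - z)) * tr g θ ∂μc

namespace Aux

def e (θ : ℝ) : ℂ := Complex.exp ((θ : ℂ) * Complex.I)

lemma cont_e : Continuous e :=
  Complex.continuous_exp.comp (Complex.continuous_ofReal.mul continuous_const)

lemma norm_e (θ : ℝ) : ‖e θ‖ = 1 := by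
  exact Complex.norm_exp_ofReal_mul_I θ

lemma e_ne (θ : ℝ) : e θ ≠ 0 := Complex.exp_ne_zero _

lemma e_mem (θ : ℝ) : e θ ∈ Metric.sphere (0 : ℂ) 1 := by
  rw [mem_sphere_zero_iff_norm]; exact norm_e θ

instance : IsFiniteMeasure μc := by
  constructor
  simp only [μc, Measure.restrict_apply_univ]
  simp [Real.volume_Ioc]
  exact ENNReal.mul_lt_top (by norm_num) ENNReal.ofReal_lt_top

lemma intf {f : ℂ → ℂ} (hf2 : MemL2circ f) : Integrable (tr f) μc :=
  hf2.integrable (by norm_num)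

lemma intF {f : ℂ → ℂ} (hf : Integrable (tr f) μc) {F : ℂ → ℂ}
    (hF : ContinuousOn F (Metric.sphere (0:ℂ) 1)) :
    Integrable (fun θ => F (e θ) * tr f θ) μc := by
  obtain ⟨C, hC⟩ := (isCompact_sphere (0:ℂ) 1).exists_bound_of_continuousOn hF
  refine Integrable.bdd_mul hf ?_ (ae_of_all _ fun θ => hC _ (e_mem θ))
  have hcont : Continuous (fun θ : ℝ => F (e θ)) := by
    rw [← continuousOn_univ]
    exact hF.comp cont_e.continuousOn (fun θ _ => e_mem θ)
  exact hcont.aestronglyMeasurable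

lemma two_pi_inv_ne : (2 * (π:ℂ))⁻¹ ≠ 0 :=
  inv_ne_zero (mul_ne_zero two_ne_zero (Complex.ofReal_ne_zero.mpr Real.pi_ne_zero))

lemma moment0 {f : ℂ → ℂ} (hfH : ∀ k : ℤ, 0 ≤ k → fc f k = 0) (m : ℕ) :
    ∫ θ, ((e θ)⁻¹)^m * tr f θ ∂μc = 0 := by
  have h := hfH m (by positivity)
  rw [fc] at h
  have he : ∀ θ : ℝ, Complex.exp (-((m:ℤ) : ℂ) * (θ:ℂ) * Complex.I) = ((e θ)⁻¹)^m := by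
    intro θ
    rw [show ((e θ)⁻¹ : ℂ) = Complex.exp (-((θ:ℂ) * Complex.I)) from by
      rw [Complex.exp_neg]; rfl, ← Complex.exp_nat_mul]
    congr 1; push_cast; ring
  simp_rw [he] at h
  rcases mul_eq_zero.mp h with h' | h'
  · exact absurd h' two_pi_inv_ne
  · exact h'

lemma ipmp {w : ℂ} (hw : w ≠ 0) {j k : ℕ} (h : j ≤ k) : (w⁻¹)^k * w^j = (w⁻¹)^(k-j) := by
  rw [inv_pow, inv_pow, pow_sub₀ w hw h, mul_inv, inv_inv]

lemma contOn_inv_pow (c : ℂ) (m : ℕ) :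
    ContinuousOn (fun u : ℂ => c * (u⁻¹)^m) (Metric.sphere (0:ℂ) 1) := by
  refine continuousOn_const.mul (ContinuousOn.pow ?_ m)
  refine ContinuousOn.inv₀ continuousOn_id ?_
  intro u hu
  rw [mem_sphere_zero_iff_norm] at hu
  intro h0; rw [h0] at hu; simp at hu

lemma momentQ {f : ℂ → ℂ} (hf : Integrable (tr f) μc)
    (hfH : ∀ k : ℤ, 0 ≤ k → fc f k = 0)
    (Q : Polynomial ℂ) {n k : ℕ} (hQ : Q.natDegree ≤ n) (hnk : n ≤ k) :
    ∫ θ, ((e θ)⁻¹)^k * (Q.eval (e θ) * tr f θ) ∂μc = 0 := by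
  have hrw : (fun θ => ((e θ)⁻¹)^k * (Q.eval (e θ) * tr f θ))
      = fun θ => ∑ j ∈ Finset.range (n+1), Q.coeff j * (((e θ)⁻¹)^(k-j) * tr f θ) := by
    funext θ
    rw [eval_eq_sum_range' (Nat.lt_succ_of_le hQ), Finset.sum_mul, Finset.mul_sum]
    apply Finset.sum_congr rfl
    intro j hj
    rw [Finset.mem_range, Nat.lt_succ_iff] at hj
    have hjk := ipmp (e_ne θ) (hj.trans hnk)
    linear_combination (Q.coeff j * tr f θ) * hjk
  rw [hrw, integral_finset_sum]
  · apply Finset.sum_eq_zero; intro j _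
    rw [integral_const_mul, moment0 hfH (k-j), mul_zero]
  · intro j _
    have := intF hf (contOn_inv_pow (Q.coeff j) (k-j))
    simpa [mul_assoc] using this

lemma kernel_split {w z : ℂ} (hw : w ≠ 0) (hwz : w - z ≠ 0) (hz1 : z * w⁻¹ ≠ 1) (N : ℕ) :
    w / (w - z) = (∑ k ∈ Finset.range N, (z * w⁻¹)^k) + (z*w⁻¹)^N * (w/(w-z)) := by
  rw [geom_sum_eq hz1 N]
  have hzw : z - w ≠ 0 := fun h => hwz (by linear_combination -h)
  have hxw : z * w⁻¹ - 1 = (z - w) * w⁻¹ := by field_simp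
  rw [hxw, mul_pow, inv_pow]
  field_simp
  ring

lemma geom {f : ℂ → ℂ} (hf : Integrable (tr f) μc) (Q : Polynomial ℂ) (n : ℕ)
    (hQmom : ∀ k, n ≤ k → ∫ θ, ((e θ)⁻¹)^k * (Q.eval (e θ) * tr f θ) ∂μc = 0)
    {z : ℂ} (hz : ‖z‖ < 1) :
    ∫ θ, (e θ / (e θ - z)) * (Q.eval (e θ) * tr f θ) ∂μc
      = ∑ k ∈ Finset.range n, z^k * ∫ θ, ((e θ)⁻¹)^k * (Q.eval (e θ) * tr f θ) ∂μc := by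
  have hne : ∀ θ, e θ - z ≠ 0 := by
    intro θ h
    have h2 : e θ = z := by linear_combination h
    rw [← h2, norm_e] at hz
    exact lt_irrefl 1 hz
  have hz1 : ∀ θ, z * (e θ)⁻¹ ≠ 1 := by
    intro θ h1
    have := congrArg norm h1
    rw [norm_mul, norm_inv, norm_e, inv_one, mul_one, norm_one] at this
    rw [this] at hz
    exact lt_irrefl 1 hz
  have hsne : ∀ u : ℂ, u ∈ Metric.sphere (0:ℂ) 1 → u - z ≠ 0 := by
    intro u hu h
    rw [mem_sphere_zero_iff_norm] at hu
    have h2 : u = z := by linear_combination h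
    rw [← h2, hu] at hz
    exact lt_irrefl 1 hz
  have hs0 : ∀ u : ℂ, u ∈ Metric.sphere (0:ℂ) 1 → u ≠ 0 := by
    intro u hu h
    rw [mem_sphere_zero_iff_norm, h] at hu
    simp at hu
  have hK : ContinuousOn (fun u : ℂ => (u/(u-z)) * Q.eval u) (Metric.sphere (0:ℂ) 1) :=
    ((continuousOn_id.div (continuousOn_id.sub continuousOn_const) hsne).mul
      (Q.continuous.continuousOn))
  have hint1 : Integrable (fun θ => (e θ/(e θ - z)) * (Q.eval (e θ) * tr f θ)) μc := by
    have := intF hf hK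
    simpa [mul_assoc] using this
  have hintk : ∀ k:ℕ, Integrable (fun θ => ((e θ)⁻¹)^k * (Q.eval (e θ) * tr f θ)) μc := by
    intro k
    have hc : ContinuousOn (fun u : ℂ => (u⁻¹)^k * Q.eval u) (Metric.sphere (0:ℂ) 1) :=
      ((ContinuousOn.inv₀ continuousOn_id hs0).pow k).mul (Q.continuous.continuousOn)
    have := intF hf hc
    simpa [mul_assoc] using this
  have hintrem : ∀ N:ℕ, Integrable
      (fun θ => (z*(e θ)⁻¹)^N * ((e θ/(e θ - z)) * (Q.eval (e θ) * tr f θ))) μc := by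
    intro N
    have hc : ContinuousOn (fun u : ℂ => (z*u⁻¹)^N * ((u/(u-z)) * Q.eval u))
        (Metric.sphere (0:ℂ) 1) :=
      ((continuousOn_const.mul (ContinuousOn.inv₀ continuousOn_id hs0)).pow N).mul hK
    have := intF hf hc
    simpa [mul_assoc] using this
  obtain ⟨C, hC⟩ := (isCompact_sphere (0:ℂ) 1).exists_bound_of_continuousOn hK
  have key : ∀ N, n ≤ N →
      (∫ θ, (e θ/(e θ-z)) * (Q.eval (e θ) * tr f θ) ∂μc) -
        (∑ k ∈ Finset.range n, z^k * ∫ θ, ((e θ)⁻¹)^k * (Q.eval (e θ) * tr f θ) ∂μc)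
      = ∫ θ, (z*(e θ)⁻¹)^N * ((e θ/(e θ-z)) * (Q.eval (e θ) * tr f θ)) ∂μc := by
    intro N hN
    have hpt : (fun θ => (e θ/(e θ-z)) * (Q.eval (e θ) * tr f θ))
        = fun θ => (∑ k ∈ Finset.range N, z^k * (((e θ)⁻¹)^k * (Q.eval (e θ) * tr f θ)))
            + (z*(e θ)⁻¹)^N * ((e θ/(e θ-z)) * (Q.eval (e θ) * tr f θ)) := by
      funext θ
      have hks := kernel_split (e_ne θ) (hne θ) (hz1 θ) N
      conv_lhs => rw [hks]
      rw [add_mul, Finset.sum_mul]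
      congr 1
      · apply Finset.sum_congr rfl; intro k _; rw [mul_pow]; ring
      · ring
    rw [hpt, integral_add (integrable_finset_sum _ (fun k _ => (hintk k).const_mul _))
      (hintrem N), integral_finset_sum _ (fun k _ => (hintk k).const_mul _)]
    simp_rw [integral_const_mul]
    have hsub : (∑ k ∈ Finset.range n, z^k * ∫ θ, ((e θ)⁻¹)^k * (Q.eval (e θ) * tr f θ) ∂μc)
        = ∑ k ∈ Finset.range N, z^k * ∫ θ, ((e θ)⁻¹)^k * (Q.eval (e θ) * tr f θ) ∂μc := by
      apply Finset.sum_subset (Finset.range_subset_range.mpr hN)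
      intro k _ hk'
      rw [Finset.mem_range, not_lt] at hk'
      rw [hQmom k hk', mul_zero]
    rw [hsub]; ring
  have hbd : ∀ N:ℕ, ‖∫ θ, (z*(e θ)⁻¹)^N * ((e θ/(e θ-z)) * (Q.eval (e θ) * tr f θ)) ∂μc‖
      ≤ ‖z‖^N * (C * ∫ θ, ‖tr f θ‖ ∂μc) := by
    intro N
    calc ‖∫ θ, (z*(e θ)⁻¹)^N * ((e θ/(e θ-z)) * (Q.eval (e θ) * tr f θ)) ∂μc‖
        ≤ ∫ θ, ‖(z*(e θ)⁻¹)^N * ((e θ/(e θ-z)) * (Q.eval (e θ) * tr f θ))‖ ∂μc :=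
          norm_integral_le_integral_norm _
      _ ≤ ∫ θ, ‖z‖^N * (C * ‖tr f θ‖) ∂μc := by
          apply integral_mono (hintrem N).norm ((hf.norm.const_mul C).const_mul (‖z‖^N))
          intro θ
          have h1 : ‖(z*(e θ)⁻¹)^N‖ = ‖z‖^N := by
            rw [norm_pow, norm_mul, norm_inv, norm_e]; simp
          have h2 : ‖(e θ/(e θ-z)) * Q.eval (e θ)‖ ≤ C := hC _ (e_mem θ)
          calc ‖(z*(e θ)⁻¹)^N * ((e θ/(e θ-z)) * (Q.eval (e θ) * tr f θ))‖
              = ‖z‖^N * (‖(e θ/(e θ-z)) * Q.eval (e θ)‖ * ‖tr f θ‖) := by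
                rw [show (z*(e θ)⁻¹)^N * ((e θ/(e θ-z)) * (Q.eval (e θ) * tr f θ))
                  = (z*(e θ)⁻¹)^N * (((e θ/(e θ-z)) * Q.eval (e θ)) * tr f θ) by ring]
                rw [norm_mul, norm_mul, h1]
            _ ≤ ‖z‖^N * (C * ‖tr f θ‖) := by gcongr
      _ = ‖z‖^N * (C * ∫ θ, ‖tr f θ‖ ∂μc) := by
          rw [MeasureTheory.integral_const_mul, MeasureTheory.integral_const_mul]
  have hlim : Filter.Tendsto (fun N : ℕ => ‖z‖^N * (C * ∫ θ, ‖tr f θ‖ ∂μc))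
      Filter.atTop (nhds 0) := by
    have := tendsto_pow_atTop_nhds_zero_of_lt_one (norm_nonneg z) hz
    simpa using this.mul_const (C * ∫ θ, ‖tr f θ‖ ∂μc)
  have hle : ‖(∫ θ, (e θ/(e θ-z)) * (Q.eval (e θ) * tr f θ) ∂μc) -
      (∑ k ∈ Finset.range n, z^k * ∫ θ, ((e θ)⁻¹)^k * (Q.eval (e θ) * tr f θ) ∂μc)‖ ≤ 0 := by
    apply ge_of_tendsto hlim
    refine Filter.eventually_atTop.mpr ⟨n, fun N hN => ?_⟩
    rw [key N hN]
    exact hbd N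
  have := norm_le_zero_iff.mp hle
  exact sub_eq_zero.mp this

lemma natDegree_recip {q : Polynomial ℂ} {n : ℕ} (h : q.natDegree ≤ n) :
    (recip n q).natDegree ≤ n := by
  apply natDegree_le_iff_coeff_eq_zero.mpr
  intro N hN
  rw [recip, coeff_reflect, revAt_eq_self_of_lt hN, coeff_map,
    coeff_eq_zero_of_natDegree_lt (lt_of_le_of_lt h hN), map_zero]

lemma conj_eq_inv {w : ℂ} (hw : ‖w‖ = 1) : (starRingEnd ℂ) w = w⁻¹ := by
  have h1 : w * (starRingEnd ℂ) w = 1 := by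
    rw [Complex.mul_conj]
    rw [Complex.normSq_eq_norm_sq, hw]
    norm_num
  have hw0 : w ≠ 0 := by intro h0; rw [h0] at hw; simp at hw
  field_simp
  linear_combination h1

lemma recip_eval_circle (q : Polynomial ℂ) {n : ℕ} (h : q.natDegree ≤ n) {w : ℂ}
    (hw : ‖w‖ = 1) :
    w ^ n * (starRingEnd ℂ) ((recip n q).eval w) = q.eval w := by
  have hw0 : w ≠ 0 := by intro h0; rw [h0] at hw; simp at hw
  rw [eval_eq_sum_range' (Nat.lt_succ_of_le (natDegree_recip h)),
    eval_eq_sum_range' (Nat.lt_succ_of_le h), map_sum, Finset.mul_sum,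
    ← Finset.sum_range_reflect]
  apply Finset.sum_congr rfl
  intro i hi
  rw [Finset.mem_range, Nat.lt_succ_iff] at hi
  have hrev : n + 1 - 1 - i = n - i := by omega
  rw [hrev]
  rw [map_mul, map_pow, conj_eq_inv hw]
  rw [recip, coeff_reflect, revAt_le (Nat.sub_le n i), coeff_map, Complex.conj_conj]
  have hni : q.coeff (n - (n - i)) = q.coeff i := by congr 1; omega
  rw [hni]
  have hp : w ^ n * (w⁻¹)^(n-i) = w ^ i := by
    rw [inv_pow, ← pow_sub₀ w hw0 (Nat.sub_le n i)]
    exact congrArg (w ^ ·) (by omega)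
  linear_combination q.coeff i * hp

lemma recip_ne_circle (q : Polynomial ℂ) {n : ℕ} (h : q.natDegree ≤ n)
    (hroots : ∀ z : ℂ, q.eval z = 0 → ‖z‖ < 1) {w : ℂ} (hw : ‖w‖ = 1) :
    (recip n q).eval w ≠ 0 := by
  intro h0
  have hk := recip_eval_circle q h hw
  rw [h0, map_zero, mul_zero] at hk
  have h2 := hroots w hk.symm
  rw [hw] at h2
  exact lt_irrefl 1 h2

lemma sphere_norm {u : ℂ} (hu : u ∈ Metric.sphere (0:ℂ) 1) : ‖u‖ = 1 :=
  mem_sphere_zero_iff_norm.mp hu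

lemma sphere_ne_zero {u : ℂ} (hu : u ∈ Metric.sphere (0:ℂ) 1) : u ≠ 0 := by
  intro h0; rw [mem_sphere_zero_iff_norm, h0] at hu; simp at hu

lemma intKer {f : ℂ → ℂ} (hf : Integrable (tr f) μc) (q : Polynomial ℂ) {z : ℂ}
    (hz : ‖z‖ < 1) :
    Integrable (fun θ => (e θ/(e θ - z)) * (q.eval (e θ) * tr f θ)) μc := by
  have hsne : ∀ u : ℂ, u ∈ Metric.sphere (0:ℂ) 1 → u - z ≠ 0 := by
    intro u hu h
    have h2 : u = z := by linear_combination h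
    rw [← h2, sphere_norm hu] at hz
    exact lt_irrefl 1 hz
  have hK : ContinuousOn (fun u : ℂ => (u/(u-z)) * q.eval u) (Metric.sphere (0:ℂ) 1) :=
    ((continuousOn_id.div (continuousOn_id.sub continuousOn_const) hsne).mul
      (q.continuous.continuousOn))
  have := intF hf hK
  simpa [mul_assoc] using this

lemma intQmix {f : ℂ → ℂ} (hf : Integrable (tr f) μc) (q Qt : Polynomial ℂ)
    (hQtne : ∀ u : ℂ, ‖u‖ = 1 → Qt.eval u ≠ 0) (c : ℂ) (r : ℕ) :
    Integrable (fun θ => c * ((e θ)^r * ((q.eval (e θ)/Qt.eval (e θ)) * tr f θ))) μc := by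
  have hG : ContinuousOn (fun u : ℂ => c * (u^r * (q.eval u/Qt.eval u)))
      (Metric.sphere (0:ℂ) 1) :=
    continuousOn_const.mul ((continuousOn_id.pow r).mul
      ((q.continuous.continuousOn).div (Qt.continuous.continuousOn)
        (fun u hu => hQtne u (sphere_norm hu))))
  have := intF hf hG
  simpa [mul_assoc] using this

end Aux

/-- For f ∈ H̄²'⁰ and qₙ ∈ Pₙ with all roots in the open unit disk,
q̃ₙ ⋅ P₊(f qₙ / q̃ₙ) is a polynomial of degree at most n − 1. -/
theorem stmt3 (f : ℂ → ℂ) (n : ℕ) (q : Polynomial ℂ)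
    (hf2 : MemL2circ f) (hfH : ∀ k : ℤ, 0 ≤ k → fc f k = 0)
    (hq0 : q ≠ 0) (hdeg : q.natDegree ≤ n)
    (hroots : ∀ z : ℂ, q.eval z = 0 → ‖z‖ < 1) :
    ∃ p : Polynomial ℂ, p.degree < (n : WithBot ℕ) ∧
      ∀ z ∈ Metric.ball (0 : ℂ) 1,
        (recip n q).eval z *
            Pplus (fun w => f w * q.eval w / (recip n q).eval w) z = p.eval z := by
  classical
  set Qt := recip n q with hQtdef
  have hQtd : Qt.natDegree ≤ n := Aux.natDegree_recip hdeg
  have hQtne : ∀ u : ℂ, ‖u‖ = 1 → Qt.eval u ≠ 0 :=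
    fun u hu => Aux.recip_ne_circle q hdeg hroots hu
  have hintf : Integrable (tr f) μc := Aux.intf hf2
  set B : ℕ → ℂ := fun k => ∫ θ, ((Aux.e θ)⁻¹)^k * (q.eval (Aux.e θ) * tr f θ) ∂μc with hBdef
  set A : ℕ → ℕ → ℂ := fun m i =>
    Qt.coeff m * ∫ θ, (Aux.e θ)^(m-i) * ((q.eval (Aux.e θ)/Qt.eval (Aux.e θ)) * tr f θ) ∂μc
    with hAdef
  refine ⟨Polynomial.C (2*(π:ℂ))⁻¹ *
    ((∑ k ∈ Finset.range n, Polynomial.C (B k) * Polynomial.X^k)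
      - ∑ m ∈ Finset.range (n+1), ∑ i ∈ Finset.range m,
          Polynomial.C (A m i) * Polynomial.X^i), ?_, ?_⟩
  · rw [Polynomial.degree_lt_iff_coeff_zero]
    intro m hm
    simp only [coeff_C_mul, coeff_sub, finset_sum_coeff, coeff_X_pow]
    have h1 : (∑ k ∈ Finset.range n, B k * (if m = k then (1:ℂ) else 0)) = 0 := by
      apply Finset.sum_eq_zero; intro k hk
      rw [Finset.mem_range] at hk
      rw [if_neg (by omega), mul_zero]
    have h2 : ∀ mm ∈ Finset.range (n+1),
        (∑ i ∈ Finset.range mm, A mm i * (if m = i then (1:ℂ) else 0)) = 0 := by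
      intro mm hmm
      apply Finset.sum_eq_zero; intro i hi
      rw [Finset.mem_range] at hmm hi
      rw [if_neg (by omega), mul_zero]
    rw [h1, Finset.sum_eq_zero h2]
    simp
  · intro z hzz
    rw [Metric.mem_ball, dist_zero_right] at hzz
    have hz := hzz
    have hQmom : ∀ k, n ≤ k →
        ∫ θ, ((Aux.e θ)⁻¹)^k * (q.eval (Aux.e θ) * tr f θ) ∂μc = 0 :=
      fun k hk => Aux.momentQ hintf hfH q hdeg hk
    have hgeom := Aux.geom hintf q n hQmom hz
    have htrg : ∀ θ, tr (fun u => f u * q.eval u / Qt.eval u) θ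
        = (q.eval (Aux.e θ) / Qt.eval (Aux.e θ)) * tr f θ := by
      intro θ
      show f (Aux.e θ) * q.eval (Aux.e θ) / Qt.eval (Aux.e θ)
        = (q.eval (Aux.e θ) / Qt.eval (Aux.e θ)) * f (Aux.e θ)
      ring
    have hptw : (fun θ => Qt.eval z * ((Aux.e θ/(Aux.e θ - z))
          * ((q.eval (Aux.e θ)/Qt.eval (Aux.e θ)) * tr f θ)))
        = fun θ => (Aux.e θ/(Aux.e θ - z)) * (q.eval (Aux.e θ) * tr f θ)
            - ∑ m ∈ Finset.range (n+1), ∑ i ∈ Finset.range m,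
                z^i * (Qt.coeff m * ((Aux.e θ)^(m-i)
                  * ((q.eval (Aux.e θ)/Qt.eval (Aux.e θ)) * tr f θ))) := by
      funext θ
      have h1 : ‖Aux.e θ‖ = 1 := Aux.norm_e θ
      have hw0 := Aux.e_ne θ
      have hwz : Aux.e θ - z ≠ 0 := by
        intro h
        have h2 : Aux.e θ = z := by linear_combination h
        rw [← h2, h1] at hz
        exact lt_irrefl 1 hz
      have hQw : Qt.eval (Aux.e θ) ≠ 0 := hQtne _ h1
      have hdq : Qt.eval z = Qt.eval (Aux.e θ) - (Aux.e θ - z)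
          * (∑ m ∈ Finset.range (n+1), Qt.coeff m
              * ∑ i ∈ Finset.range m, z^i * (Aux.e θ)^(m-1-i)) := by
        rw [eval_eq_sum_range' (Nat.lt_succ_of_le hQtd) z,
          eval_eq_sum_range' (Nat.lt_succ_of_le hQtd) (Aux.e θ),
          Finset.mul_sum, ← Finset.sum_sub_distrib]
        apply Finset.sum_congr rfl
        intro m _
        have hg := geom_sum₂_mul z (Aux.e θ) m
        linear_combination (-(Qt.coeff m)) * hg
      rw [hdq, sub_mul]
      congr 1
      · field_simp
      · have hK : (Aux.e θ - z) * (Aux.e θ/(Aux.e θ - z)) = Aux.e θ := by field_simp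
        rw [show ((Aux.e θ - z) * (∑ m ∈ Finset.range (n+1), Qt.coeff m
              * ∑ i ∈ Finset.range m, z^i * (Aux.e θ)^(m-1-i)))
            * ((Aux.e θ/(Aux.e θ - z)) * ((q.eval (Aux.e θ)/Qt.eval (Aux.e θ)) * tr f θ))
          = ((Aux.e θ - z) * (Aux.e θ/(Aux.e θ - z)))
            * ((∑ m ∈ Finset.range (n+1), Qt.coeff m
              * ∑ i ∈ Finset.range m, z^i * (Aux.e θ)^(m-1-i))
              * ((q.eval (Aux.e θ)/Qt.eval (Aux.e θ)) * tr f θ)) from by ring, hK]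
        rw [Finset.sum_mul, Finset.mul_sum]
        apply Finset.sum_congr rfl
        intro m _
        rw [Finset.mul_sum, Finset.sum_mul, Finset.mul_sum]
        apply Finset.sum_congr rfl
        intro i hi
        rw [Finset.mem_range] at hi
        rw [show m - i = (m-1-i)+1 from by omega, pow_succ]
        ring
    have hint2 : ∀ m ∈ Finset.range (n+1), ∀ i ∈ Finset.range m,
        Integrable (fun θ => z^i * (Qt.coeff m * ((Aux.e θ)^(m-i)
          * ((q.eval (Aux.e θ)/Qt.eval (Aux.e θ)) * tr f θ)))) μc := by
      intro m _ i _
      exact (Aux.intQmix hintf q Qt hQtne (Qt.coeff m) (m-i)).const_mul (z^i)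
    calc Qt.eval z * Pplus (fun u => f u * q.eval u / Qt.eval u) z
        = (2*(π:ℂ))⁻¹ * ∫ θ, Qt.eval z * ((Aux.e θ/(Aux.e θ - z))
            * ((q.eval (Aux.e θ)/Qt.eval (Aux.e θ)) * tr f θ)) ∂μc := by
          show Qt.eval z * ((2*(π:ℂ))⁻¹ * ∫ θ, (Aux.e θ / (Aux.e θ - z))
            * tr (fun u => f u * q.eval u / Qt.eval u) θ ∂μc) = _
          simp_rw [htrg]
          rw [MeasureTheory.integral_const_mul]
          ring
      _ = (2*(π:ℂ))⁻¹ * ((∑ k ∈ Finset.range n, z^k * B k)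
            - ∑ m ∈ Finset.range (n+1), ∑ i ∈ Finset.range m, z^i * A m i) := by
          congr 1
          have hgeom' : ∫ θ, (Aux.e θ/(Aux.e θ - z)) * (q.eval (Aux.e θ) * tr f θ) ∂μc
              = ∑ k ∈ Finset.range n, z^k * B k := by
            simp only [hBdef]; exact hgeom
          have hsum2 : (∫ θ, (∑ m ∈ Finset.range (n+1), ∑ i ∈ Finset.range m,
                z^i * (Qt.coeff m * ((Aux.e θ)^(m-i)
                  * ((q.eval (Aux.e θ)/Qt.eval (Aux.e θ)) * tr f θ)))) ∂μc)
              = ∑ m ∈ Finset.range (n+1), ∑ i ∈ Finset.range m, z^i * A m i := by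
            rw [integral_finset_sum _ (fun m hm => integrable_finset_sum _ (hint2 m hm))]
            apply Finset.sum_congr rfl
            intro m hm
            rw [integral_finset_sum _ (hint2 m hm)]
            apply Finset.sum_congr rfl
            intro i _
            rw [MeasureTheory.integral_const_mul, MeasureTheory.integral_const_mul]
          rw [hptw, MeasureTheory.integral_sub (Aux.intKer hintf q hz)
            (integrable_finset_sum _ (fun m hm => integrable_finset_sum _ (hint2 m hm))),
            hgeom', hsum2]
      _ = _ := by
          simp only [eval_mul, eval_C, eval_sub, Polynomial.eval_finset_sum, eval_pow, eval_X]
          congr 1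
          congr 1
          · exact Finset.sum_congr rfl (fun k _ => mul_comm _ _)
          · exact Finset.sum_congr rfl (fun m _ =>
              Finset.sum_congr rfl (fun i _ => mul_comm _ _))
end
end

section
/- Let q ∈ P_N have all roots in the open unit disk, and let a, b ∈ P_{N−1} satisfy the Bezout relation a·q̃ + b·q = 1. Then for any polynomials u, v of degree at most N−1, the L²(𝕋) inner product ⟨u/q, v/q⟩ equals the inner product ⟨Q_q(z^N u a), v⟩, where Q_q(P) denotes the quotient of Euclidean division of the polynomial P by q. -/
open MeasureTheory Complex Real Polynomial

noncomputable section

lemma eval_reflect' (n : ℕ) (p : Polynomial ℂ) (hp : p.natDegree ≤ n) (w : ℂ) (hw : w ≠ 0) :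
    (p.reflect n).eval w = w ^ n * p.eval w⁻¹ := by
  letI : Invertible (w⁻¹) := invertibleOfNonzero (inv_ne_zero hw)
  have h := Polynomial.eval₂_reflect_mul_pow (RingHom.id ℂ) (w⁻¹) n p hp
  rw [invOf_eq_inv, inv_inv] at h
  simp only [Polynomial.eval₂_eq_eval_map, Polynomial.map_id] at h
  rw [← h]; field_simp
  rw [one_div, inv_pow, mul_assoc, mul_inv_cancel₀ (pow_ne_zero _ hw), mul_one]

lemma conj_eval (p : Polynomial ℂ) (z : ℂ) :
    (starRingEnd ℂ) (p.eval z) = (p.map (starRingEnd ℂ)).eval ((starRingEnd ℂ) z) := by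
  rw [Polynomial.eval_map, Polynomial.eval₂_at_apply]

lemma reflect_ne_on_disk {N : ℕ} (p : Polynomial ℂ) (hlc : p.coeff N ≠ 0)
    (hpd : p.natDegree ≤ N)
    (hroots : ∀ z : ℂ, p.eval z = 0 → ‖z‖ < 1) :
    ∀ w : ℂ, ‖w‖ ≤ 1 → (p.reflect N).eval w ≠ 0 := by
  intro w hw
  rcases eq_or_ne w 0 with rfl | hw0
  · rw [← Polynomial.coeff_zero_eq_eval_zero, Polynomial.coeff_reflect,
      Polynomial.revAt_le (Nat.zero_le N)]
    simpa using hlc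
  · rw [eval_reflect' N p hpd w hw0]
    have h1 : ‖w⁻¹‖ ≥ 1 := by
      rw [norm_inv]
      exact (one_le_inv₀ (norm_pos_iff.mpr hw0)).mpr hw
    have h2 : p.eval w⁻¹ ≠ 0 := fun h => absurd (hroots _ h) (by linarith)
    exact mul_ne_zero (pow_ne_zero _ hw0) h2

lemma meanvalue (P S : Polynomial ℂ) (hS : ∀ w : ℂ, ‖w‖ ≤ 1 → S.eval w ≠ 0) :
    ∫ θ in (0:ℝ)..(2*π), P.eval (Complex.exp ((θ:ℂ) * Complex.I)) / S.eval (Complex.exp ((θ:ℂ) * Complex.I))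
      = 2 * π * (P.eval 0 / S.eval 0) := by
  set f : ℂ → ℂ := fun z => P.eval z / S.eval z with hf
  have hdiff : DiffContOnCl ℂ f (Metric.ball (0:ℂ) 1) := by
    apply DifferentiableOn.diffContOnCl
    rw [closure_ball (0:ℂ) one_ne_zero]
    intro z hz
    exact ((P.differentiable.differentiableAt).div (S.differentiable.differentiableAt)
      (hS z (by simpa [Metric.mem_closedBall] using hz))).differentiableWithinAt
  have h0 : (0:ℂ) ∈ Metric.ball (0:ℂ) 1 := by simp
  have key := hdiff.circleIntegral_sub_inv_smul h0
  rw [circleIntegral] at key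
  simp only [deriv_circleMap, circleMap_zero, one_mul, sub_zero, smul_eq_mul, ofReal_one] at key
  have hcongr : ∀ θ : ℝ, Complex.exp ((θ:ℂ) * Complex.I) * Complex.I *
      ((Complex.exp ((θ:ℂ) * Complex.I))⁻¹ * f (Complex.exp ((θ:ℂ) * Complex.I)))
      = Complex.I * f (Complex.exp ((θ:ℂ) * Complex.I)) := by
    intro θ; field_simp
  rw [intervalIntegral.integral_congr (fun θ _ => hcongr θ)] at key
  rw [intervalIntegral.integral_const_mul] at key
  have h2 : (∫ θ : ℝ in (0:ℝ)..(2*π), f (Complex.exp ((θ:ℂ) * Complex.I))) = 2 * (π:ℂ) * f 0 :=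
    mul_left_cancel₀ Complex.I_ne_zero (by rw [key]; ring)
  simpa [hf] using h2

lemma pointwise (N : ℕ) (hN : 1 ≤ N) (q a b u v : Polynomial ℂ)
    (hq : q.Monic) (hqd : q.natDegree = N)
    (hroots : ∀ z : ℂ, q.eval z = 0 → ‖z‖ < 1)
    (hbez : a * recip N q + b * q = 1)
    (hv : v.degree < (N : WithBot ℕ))
    (z : ℂ) (hz : ‖z‖ = 1) :
    u.eval z / q.eval z * (starRingEnd ℂ) (v.eval z / q.eval z) =
      ((X ^ N * u * a) /ₘ q).eval z * (starRingEnd ℂ) (v.eval z)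
      + ((((X ^ N * u * a) %ₘ q).reflect N) * (v.map (starRingEnd ℂ))).eval z⁻¹
          / (q.reflect N).eval z⁻¹
      + (X * (u * b * ((v.map (starRingEnd ℂ)).reflect (N - 1)))).eval z
          / (recip N q).eval z := by
  have hz0 : z ≠ 0 := by intro h; rw [h] at hz; simp at hz
  have hzi : z⁻¹ ≠ 0 := inv_ne_zero hz0
  have hconj : (starRingEnd ℂ) z = z⁻¹ := by
    have h1 : z * (starRingEnd ℂ) z = 1 := by
      rw [Complex.mul_conj]; norm_cast
      rw [Complex.normSq_eq_norm_sq, hz]; norm_num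
    field_simp [← h1]
    rw [mul_comm]; exact h1
  have hq0 : q.eval z ≠ 0 := fun h => by have := hroots z h; rw [hz] at this; exact lt_irrefl _ this
  have hqc0 : (starRingEnd ℂ) (q.eval z) ≠ 0 := by simpa using hq0
  have hvd : v.natDegree ≤ N - 1 := by
    rcases eq_or_ne v 0 with rfl | hv0
    · simp
    · have := (Polynomial.natDegree_lt_iff_degree_lt hv0).mpr hv
      omega
  have hvm : (v.map (starRingEnd ℂ)).natDegree ≤ N - 1 :=
    le_trans Polynomial.natDegree_map_le hvd
  have hqm : (q.map (starRingEnd ℂ)).natDegree ≤ N :=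
    le_trans Polynomial.natDegree_map_le (le_of_eq hqd)
  set r : Polynomial ℂ := (X ^ N * u * a) %ₘ q with hr
  have hrd : r.natDegree ≤ N := by
    have h1 : r.degree < q.degree := Polynomial.degree_modByMonic_lt _ hq
    rw [Polynomial.degree_eq_natDegree hq.ne_zero, hqd] at h1
    exact Polynomial.natDegree_le_iff_degree_le.mpr (le_of_lt h1)
  have hVc : (v.map (starRingEnd ℂ)).eval z⁻¹ = (starRingEnd ℂ) (v.eval z) := by
    rw [conj_eval, hconj]
  have hQc : (q.map (starRingEnd ℂ)).eval z⁻¹ = (starRingEnd ℂ) (q.eval z) := by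
    rw [conj_eval, hconj]
  have hRr : (r.reflect N).eval z⁻¹ = (z⁻¹) ^ N * r.eval z := by
    rw [eval_reflect' N r hrd z⁻¹ hzi, inv_inv]
  have hRq : (q.reflect N).eval z⁻¹ = (z⁻¹) ^ N * q.eval z := by
    rw [eval_reflect' N q (le_of_eq hqd) z⁻¹ hzi, inv_inv]
  have hRV : ((v.map (starRingEnd ℂ)).reflect (N - 1)).eval z
      = z ^ (N - 1) * (starRingEnd ℂ) (v.eval z) := by
    rw [eval_reflect' (N-1) _ hvm z hz0, hVc]
  have hrecip : (recip N q).eval z = z ^ N * (starRingEnd ℂ) (q.eval z) := by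
    rw [recip, eval_reflect' N _ hqm z hz0, hQc]
  have hdiv : r.eval z + q.eval z * ((X ^ N * u * a) /ₘ q).eval z
      = z ^ N * u.eval z * a.eval z := by
    have := Polynomial.modByMonic_add_div (X ^ N * u * a) q
    calc r.eval z + q.eval z * ((X ^ N * u * a) /ₘ q).eval z
        = ((X ^ N * u * a) %ₘ q + q * ((X ^ N * u * a) /ₘ q)).eval z := by simp [hr]
      _ = (X ^ N * u * a).eval z := by rw [this]
      _ = z ^ N * u.eval z * a.eval z := by simp
  have hbez' : a.eval z * (z ^ N * (starRingEnd ℂ) (q.eval z)) + b.eval z * q.eval z = 1 := by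
    have := congrArg (Polynomial.eval z) hbez
    simpa [hrecip] using this
  have hzN : (z:ℂ) ^ N ≠ 0 := pow_ne_zero _ hz0
  have hzNsplit : z ^ N = z * z ^ (N - 1) := by
    rw [← pow_succ']; congr 1; omega
  rw [map_div₀]
  simp only [Polynomial.eval_mul, Polynomial.eval_X, hRr, hRq, hVc, hRV, hrecip]
  field_simp
  linear_combination
    (-(u.eval z * (starRingEnd ℂ) (v.eval z) * z ^ N)) * hbez'
    + (-((starRingEnd ℂ) (v.eval z) * (starRingEnd ℂ) (q.eval z) * z ^ N)) * hdiv
    + ((starRingEnd ℂ) (v.eval z) * u.eval z * q.eval z * b.eval z) * hzNsplit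

/-- With q ∈ P_N monic with all roots in the open unit disk and a, b ∈ P_{N−1}
satisfying the Bezout relation a·q̃ + b·q = 1, the L²(𝕋) inner product
⟨u/q, v/q⟩ equals ⟨Q_q(z^N u a), v⟩ for all u, v ∈ P_{N−1}, where Q_q(P) is the
quotient of the Euclidean division of P by q. -/
theorem stmt13 (N : ℕ) (hN : 1 ≤ N) (q a b u v : Polynomial ℂ)
    (hq : q.Monic) (hqd : q.natDegree = N)
    (hroots : ∀ z : ℂ, q.eval z = 0 → ‖z‖ < 1)
    (ha : a.degree < (N : WithBot ℕ)) (hb : b.degree < (N : WithBot ℕ))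
    (hbez : a * recip N q + b * q = 1)
    (hu : u.degree < (N : WithBot ℕ)) (hv : v.degree < (N : WithBot ℕ)) :
    innerC (fun z => u.eval z / q.eval z) (fun z => v.eval z / q.eval z) =
      innerC (fun z => ((Polynomial.X ^ N * u * a) /ₘ q).eval z)
        (fun z => v.eval z) := by
  classical
  set e : ℝ → ℂ := fun θ => Complex.exp ((θ:ℂ) * Complex.I) with he
  have habs : ∀ θ : ℝ, ‖e θ‖ = 1 := fun θ => Complex.norm_exp_ofReal_mul_I θ
  have hcont_e : Continuous e := by
    apply Complex.continuous_exp.comp; fun_prop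
  -- the three correction pieces
  set r : Polynomial ℂ := (X ^ N * u * a) %ₘ q with hrdef
  set G : Polynomial ℂ := (r.reflect N) * (v.map (starRingEnd ℂ)) with hGdef
  set H : Polynomial ℂ := X * (u * b * ((v.map (starRingEnd ℂ)).reflect (N - 1))) with hHdef
  have hq1 : q.coeff N ≠ 0 := by
    have := hq.leadingCoeff
    rw [Polynomial.leadingCoeff, hqd] at this
    simp [this]
  have hGden : ∀ w : ℂ, ‖w‖ ≤ 1 → (q.reflect N).eval w ≠ 0 :=
    reflect_ne_on_disk q hq1 (le_of_eq hqd) hroots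
  have hHden : ∀ w : ℂ, ‖w‖ ≤ 1 → (recip N q).eval w ≠ 0 := by
    apply reflect_ne_on_disk
    · simpa [Polynomial.coeff_map] using hq1
    · exact le_trans Polynomial.natDegree_map_le (le_of_eq hqd)
    · intro w hw
      have : (starRingEnd ℂ) (q.eval ((starRingEnd ℂ) w)) = (q.map (starRingEnd ℂ)).eval w := by
        rw [conj_eval]; simp
      rw [← this] at hw
      have h0 : q.eval ((starRingEnd ℂ) w) = 0 := by
        simpa using hw
      have := hroots _ h0
      simpa using this
  -- interval integral versions
  have hμ : ∀ F : ℝ → ℂ, (∫ θ, F θ ∂μc) = ∫ θ in (0:ℝ)..(2*π), F θ := by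
    intro F
    rw [μc, intervalIntegral.integral_of_le Real.two_pi_pos.le]
  -- pointwise identity
  have hpt : ∀ θ : ℝ,
      u.eval (e θ) / q.eval (e θ) * (starRingEnd ℂ) (v.eval (e θ) / q.eval (e θ)) =
      ((X ^ N * u * a) /ₘ q).eval (e θ) * (starRingEnd ℂ) (v.eval (e θ))
      + G.eval (e θ)⁻¹ / (q.reflect N).eval (e θ)⁻¹
      + H.eval (e θ) / (recip N q).eval (e θ) := fun θ =>
    pointwise N hN q a b u v hq hqd hroots hbez hv (e θ) (habs θ)
  -- continuity of pieces
  have hinv_e : ∀ θ : ℝ, (e θ)⁻¹ = Complex.exp ((-θ:ℝ) * Complex.I) := by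
    intro θ
    rw [← Complex.exp_neg]
    push_cast
    ring_nf
  have hcont_einv : Continuous (fun θ : ℝ => (e θ)⁻¹) := by
    have : (fun θ : ℝ => (e θ)⁻¹) = fun θ : ℝ => Complex.exp ((-θ:ℝ) * Complex.I) := by
      funext θ; exact hinv_e θ
    rw [this]
    apply Complex.continuous_exp.comp; fun_prop
  have habs_inv : ∀ θ : ℝ, ‖(e θ)⁻¹‖ = 1 := by
    intro θ; rw [norm_inv, habs]; norm_num
  have hi2 : IntervalIntegrable
      (fun θ => ((X ^ N * u * a) /ₘ q).eval (e θ) * (starRingEnd ℂ) (v.eval (e θ)))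
      volume 0 (2*π) := by
    apply Continuous.intervalIntegrable
    exact ((((X ^ N * u * a) /ₘ q).continuous_aeval).comp hcont_e).mul
      (Complex.continuous_conj.comp ((v.continuous_aeval).comp hcont_e))
  have hi3 : IntervalIntegrable
      (fun θ => G.eval (e θ)⁻¹ / (q.reflect N).eval (e θ)⁻¹) volume 0 (2*π) := by
    apply Continuous.intervalIntegrable
    exact (G.continuous_aeval.comp hcont_einv).div
      ((q.reflect N).continuous_aeval.comp hcont_einv)
      (fun θ => hGden _ (le_of_eq (habs_inv θ)))
  have hi4 : IntervalIntegrable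
      (fun θ => H.eval (e θ) / (recip N q).eval (e θ)) volume 0 (2*π) := by
    apply Continuous.intervalIntegrable
    exact (H.continuous_aeval.comp hcont_e).div
      ((recip N q).continuous_aeval.comp hcont_e)
      (fun θ => hHden _ (le_of_eq (habs θ)))
  -- vanishing of the two correction integrals
  have hper : ∀ θ : ℝ, e (2*π - θ) = (e θ)⁻¹ := by
    intro θ
    rw [hinv_e θ, he]
    simp only
    rw [show ((2*π - θ : ℝ) : ℂ) * Complex.I = 2*π*Complex.I + ((-θ:ℝ):ℂ)*Complex.I by push_cast; ring,
      Complex.exp_add, Complex.exp_two_pi_mul_I, one_mul]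
  have hint3 : (∫ θ in (0:ℝ)..(2*π), G.eval (e θ)⁻¹ / (q.reflect N).eval (e θ)⁻¹) = 0 := by
    have hcong : ∀ θ ∈ Set.uIcc (0:ℝ) (2*π),
        G.eval (e θ)⁻¹ / (q.reflect N).eval (e θ)⁻¹
        = (fun t : ℝ => G.eval (e t) / (q.reflect N).eval (e t)) (2*π - θ) := by
      intro θ _
      simp only [hper θ]
    rw [intervalIntegral.integral_congr hcong,
      intervalIntegral.integral_comp_sub_left (fun t : ℝ => G.eval (e t) / (q.reflect N).eval (e t)) (2*π)]
    norm_num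
    have := meanvalue G (q.reflect N) hGden
    rw [he]
    simp only
    rw [this]
    have hG0 : G.eval 0 = 0 := by
      have hrN : r.coeff N = 0 := by
        apply Polynomial.coeff_eq_zero_of_degree_lt
        have h1 : r.degree < q.degree := Polynomial.degree_modByMonic_lt _ hq
        rwa [Polynomial.degree_eq_natDegree hq.ne_zero, hqd] at h1
      rw [hGdef, Polynomial.eval_mul, ← Polynomial.coeff_zero_eq_eval_zero,
        Polynomial.coeff_reflect, Polynomial.revAt_le (Nat.zero_le N)]
      simp [hrN]
    rw [hG0]
    simp
  have hint4 : (∫ θ in (0:ℝ)..(2*π), H.eval (e θ) / (recip N q).eval (e θ)) = 0 := by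
    have := meanvalue H (recip N q) hHden
    rw [he]
    simp only
    rw [this]
    have hH0 : H.eval 0 = 0 := by
      rw [hHdef]; simp
    rw [hH0]
    simp
  -- assemble
  simp only [innerC, tr, hμ]
  have hsplit : (∫ θ in (0:ℝ)..(2*π),
      u.eval (Complex.exp ((θ:ℂ) * Complex.I)) / q.eval (Complex.exp ((θ:ℂ) * Complex.I)) *
        (starRingEnd ℂ) (v.eval (Complex.exp ((θ:ℂ) * Complex.I)) / q.eval (Complex.exp ((θ:ℂ) * Complex.I))))
      = ∫ θ in (0:ℝ)..(2*π),
        (((X ^ N * u * a) /ₘ q).eval (e θ) * (starRingEnd ℂ) (v.eval (e θ))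
        + G.eval (e θ)⁻¹ / (q.reflect N).eval (e θ)⁻¹
        + H.eval (e θ) / (recip N q).eval (e θ)) := by
    apply intervalIntegral.integral_congr
    intro θ _
    exact hpt θ
  rw [hsplit, intervalIntegral.integral_add (hi2.add hi3) hi4,
    intervalIntegral.integral_add hi2 hi3, hint3, hint4]
  simp [he]
end
end

section
/- Let f ∈ H̄²'⁰ and π_n a polynomial of degree at most n with no roots on the unit circle. Then d₂(f, R_{n−1,n}) ≥ min over q_n ∈ P_{π_n} and p_{n−1} ∈ P_{n−1} of ‖(q_n f − p_{n−1})/π_n‖₂, where P_{π_n} = {q_n of degree ≤ n : ‖q_n/π_n‖_∞ = 1}. -/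
open MeasureTheory Complex Real Polynomial

noncomputable section

/-- Rational functions of type (n−1, n) without poles on the unit circle,
viewed through their boundary values. -/
def RcircSet (n : ℕ) : Set (ℂ → ℂ) :=
  {r | ∃ p q : Polynomial ℂ, p.degree < (n : WithBot ℕ) ∧ q.natDegree ≤ n ∧
      (∀ z : ℂ, ‖z‖ = 1 → q.eval z ≠ 0) ∧
      ∀ z : ℂ, ‖z‖ = 1 → r z = p.eval z / q.eval z}

instance : IsFiniteMeasure μc := by
  unfold μc; infer_instance

lemma l2_mono {g h : ℂ → ℂ} (hm : AEStronglyMeasurable (tr g) μc)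
    (hh : MemLp (tr h) 2 μc)
    (hle : ∀ θ : ℝ, ‖tr g θ‖ ≤ ‖tr h θ‖) : l2 g ≤ l2 h := by
  apply Real.sqrt_le_sqrt
  unfold l2sq
  have h2 : Integrable (fun θ => ‖tr h θ‖ ^ 2) μc := hh.norm.integrable_sq
  have : (∫ θ, ‖tr g θ‖ ^ 2 ∂μc) ≤ ∫ θ, ‖tr h θ‖ ^ 2 ∂μc := by
    refine integral_mono_of_nonneg ?_ h2 ?_
    · filter_upwards with θ; positivity
    · filter_upwards with θ
      exact pow_le_pow_left₀ (norm_nonneg _) (hle θ) 2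
  have hπ : (0:ℝ) ≤ (2 * π)⁻¹ := by positivity
  exact mul_le_mul_of_nonneg_left this hπ

lemma hcexp_cont : Continuous fun θ : ℝ => Complex.exp ((θ:ℝ) * Complex.I) := by
  exact Complex.continuous_exp.comp (Complex.continuous_ofReal.mul continuous_const)

set_option maxHeartbeats 1000000 in
/-- Lower bound via linearized errors: for f ∈ H̄²'⁰ and πₙ ∈ Pₙ with no roots
on the circle, d₂(f, R_{n−1,n}) is at least the infimum, over qₙ ∈ Pₙ with
‖qₙ/πₙ‖_∞ = 1 and p_{n−1} ∈ P_{n−1}, of ‖(qₙ f − p_{n−1}) / πₙ‖₂. -/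
theorem stmt16 (f : ℂ → ℂ) (n : ℕ) (πn : Polynomial ℂ)
    (hf2 : MemL2circ f) (hfH : ∀ k : ℤ, 0 ≤ k → fc f k = 0)
    (hπdeg : πn.natDegree ≤ n)
    (hπ : ∀ z : ℂ, ‖z‖ = 1 → πn.eval z ≠ 0) :
    sInf {x : ℝ | ∃ qn pp : Polynomial ℂ, qn.natDegree ≤ n ∧
        pp.degree < (n : WithBot ℕ) ∧
        (∀ z : ℂ, ‖z‖ = 1 → ‖qn.eval z / πn.eval z‖ ≤ 1) ∧
        (∃ z : ℂ, ‖z‖ = 1 ∧ ‖qn.eval z / πn.eval z‖ = 1) ∧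
        x = l2 (fun z => (qn.eval z * f z - pp.eval z) / πn.eval z)} ≤
      d2circ f (RcircSet n) := by
  set S := {x : ℝ | ∃ qn pp : Polynomial ℂ, qn.natDegree ≤ n ∧
        pp.degree < (n : WithBot ℕ) ∧
        (∀ z : ℂ, ‖z‖ = 1 → ‖qn.eval z / πn.eval z‖ ≤ 1) ∧
        (∃ z : ℂ, ‖z‖ = 1 ∧ ‖qn.eval z / πn.eval z‖ = 1) ∧
        x = l2 (fun z => (qn.eval z * f z - pp.eval z) / πn.eval z)} with hS
  have hSbdd : BddBelow S := by
    refine ⟨0, ?_⟩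
    rintro x ⟨qn, pp, -, -, -, -, rfl⟩
    exact Real.sqrt_nonneg _
  -- the RHS index set is nonempty
  have hne : {x | ∃ r ∈ RcircSet n, x = l2 (fun z => f z - r z)}.Nonempty := by
    refine ⟨l2 (fun z => f z - (fun _ : ℂ => (0:ℂ)) z), (fun _ => 0), ?_, rfl⟩
    exact ⟨0, 1, by rw [Polynomial.degree_zero]; exact WithBot.bot_lt_coe n, by simp, by simp, by simp⟩
  refine le_csInf hne ?_
  rintro b ⟨r, ⟨p, q, hp, hq, hq0, hr⟩, rfl⟩
  -- maximize ‖q/πn‖ on the circle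
  have hcont : ContinuousOn (fun z : ℂ => ‖q.eval z / πn.eval z‖)
      (Metric.sphere (0:ℂ) 1) := by
    apply ContinuousOn.norm
    exact ContinuousOn.div (q.continuous.continuousOn) (πn.continuous.continuousOn)
      (fun z hz => hπ z (by simpa [Complex.norm_def] using
        mem_sphere_zero_iff_norm.mp hz))
  obtain ⟨z₀, hz₀mem, hmax⟩ := (isCompact_sphere (0:ℂ) 1).exists_isMaxOn
    ⟨1, by simp⟩ hcont
  have habs : ∀ z : ℂ, z ∈ Metric.sphere (0:ℂ) 1 ↔ ‖z‖ = 1 := by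
    intro z; rw [mem_sphere_zero_iff_norm]
  have hz₀ : ‖z₀‖ = 1 := (habs z₀).mp hz₀mem
  set M : ℝ := ‖q.eval z₀ / πn.eval z₀‖ with hM
  have hMpos : 0 < M := by
    have h1 : (1:ℂ) ∈ Metric.sphere (0:ℂ) 1 := by simp
    have := hmax h1
    have hpos : 0 < ‖q.eval 1 / πn.eval 1‖ := by
      rw [norm_pos_iff]
      exact div_ne_zero (hq0 1 (by simp)) (hπ 1 (by simp))
    exact lt_of_lt_of_le hpos this
  set c : ℝ := M⁻¹ with hc
  have hcpos : 0 < c := inv_pos.mpr hMpos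
  set qn : Polynomial ℂ := (c:ℂ) • q with hqn
  set pp : Polynomial ℂ := (c:ℂ) • p with hpp
  have hnorm : ∀ z : ℂ, ‖z‖ = 1 →
      ‖qn.eval z / πn.eval z‖ = c * ‖q.eval z / πn.eval z‖ := by
    intro z hz
    rw [hqn, Polynomial.eval_smul, smul_eq_mul, mul_div_assoc, norm_mul]
    congr 1
    simp [abs_of_pos hcpos]
  have hb1 : ∀ z : ℂ, ‖z‖ = 1 → ‖qn.eval z / πn.eval z‖ ≤ 1 := by
    intro z hz
    rw [hnorm z hz]
    calc c * ‖q.eval z / πn.eval z‖ ≤ c * M :=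
          mul_le_mul_of_nonneg_left (hmax ((habs z).mpr hz)) hcpos.le
      _ = 1 := inv_mul_cancel₀ hMpos.ne'
  have hb2 : ‖qn.eval z₀ / πn.eval z₀‖ = 1 := by
    rw [hnorm z₀ hz₀, ← hM]; exact inv_mul_cancel₀ hMpos.ne'
  -- membership of the linearized error in S
  have hmem : l2 (fun z => (qn.eval z * f z - pp.eval z) / πn.eval z) ∈ S := by
    refine ⟨qn, pp, ?_, ?_, hb1, ⟨z₀, hz₀, hb2⟩, rfl⟩
    · exact le_trans (Polynomial.natDegree_smul_le _ _) hq
    · exact lt_of_le_of_lt (Polynomial.degree_smul_le _ _) hp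
  refine le_trans (csInf_le hSbdd hmem) ?_
  -- now show the pointwise bound gives the l2 comparison
  -- tr of the difference is MemLp
  have hrcont : Continuous (tr r) := by
    have : tr r = fun θ : ℝ => p.eval (Complex.exp ((θ:ℂ) * Complex.I)) /
        q.eval (Complex.exp ((θ:ℂ) * Complex.I)) := by
      funext θ
      exact hr _ (Complex.norm_exp_ofReal_mul_I θ)
    rw [this]
    have hcexp := hcexp_cont
    exact (p.continuous.comp hcexp).div (q.continuous.comp hcexp)
      (fun θ => hq0 _ (Complex.norm_exp_ofReal_mul_I θ))
  -- bound tr r on the circle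
  have hrmem : MemLp (tr r) 2 μc := by
    have hcont2 : ContinuousOn (fun z : ℂ => ‖p.eval z / q.eval z‖)
        (Metric.sphere (0:ℂ) 1) := by
      apply ContinuousOn.norm
      exact ContinuousOn.div (p.continuous.continuousOn) (q.continuous.continuousOn)
        (fun z hz => hq0 z ((habs z).mp hz))
    obtain ⟨w₁, hw₁mem, hw₁max⟩ := (isCompact_sphere (0:ℂ) 1).exists_isMaxOn
      ⟨1, by simp⟩ hcont2
    refine MemLp.of_bound hrcont.aestronglyMeasurable (‖p.eval w₁ / q.eval w₁‖) ?_
    filter_upwards with θ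
    have hw : ‖Complex.exp ((θ:ℂ) * Complex.I)‖ = 1 :=
      Complex.norm_exp_ofReal_mul_I θ
    rw [show tr r θ = p.eval (Complex.exp ((θ:ℂ) * Complex.I)) /
        q.eval (Complex.exp ((θ:ℂ) * Complex.I)) from hr _ hw]
    exact hw₁max ((habs _).mpr hw)
  have hH : MemLp (tr (fun z => f z - r z)) 2 μc := by
    have := hf2.sub hrmem
    exact this
  -- measurability of tr of the LHS function
  have hGmeas : AEStronglyMeasurable
      (tr (fun z => (qn.eval z * f z - pp.eval z) / πn.eval z)) μc := by
    have hcexp := hcexp_cont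
    have heq : tr (fun z => (qn.eval z * f z - pp.eval z) / πn.eval z) =
        fun θ : ℝ => (qn.eval (Complex.exp ((θ:ℂ) * Complex.I)) * tr f θ -
          pp.eval (Complex.exp ((θ:ℂ) * Complex.I))) *
          (πn.eval (Complex.exp ((θ:ℂ) * Complex.I)))⁻¹ := by
      funext θ; simp only [tr]; rw [div_eq_mul_inv]
    rw [heq]
    have h1 : AEStronglyMeasurable
        (fun θ : ℝ => qn.eval (Complex.exp ((θ:ℂ) * Complex.I)) * tr f θ -
          pp.eval (Complex.exp ((θ:ℂ) * Complex.I))) μc :=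
      ((qn.continuous.comp hcexp).aestronglyMeasurable.mul
        hf2.aestronglyMeasurable).sub
        (pp.continuous.comp hcexp).aestronglyMeasurable
    have h2 : Measurable (fun θ : ℝ =>
        (πn.eval (Complex.exp ((θ:ℂ) * Complex.I)))⁻¹) :=
      (πn.continuous.comp hcexp).measurable.inv
    exact h1.mul h2.aestronglyMeasurable
  have hkey : ∀ w : ℂ, ‖w‖ = 1 →
      (qn.eval w * f w - pp.eval w) / πn.eval w =
        (qn.eval w / πn.eval w) * (f w - r w) := by
    intro w hwabs
    have hqw := hq0 w hwabs
    have hπw := hπ w hwabs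
    rw [hr w hwabs, hqn, hpp, Polynomial.eval_smul, Polynomial.eval_smul]
    field_simp
    ring
  refine l2_mono hGmeas hH ?_
  intro θ
  have hwabs : ‖Complex.exp ((θ:ℂ) * Complex.I)‖ = 1 :=
    Complex.norm_exp_ofReal_mul_I θ
  simp only [tr]
  rw [hkey _ hwabs, norm_mul]
  calc ‖qn.eval (Complex.exp ((θ:ℂ) * Complex.I)) / πn.eval (Complex.exp ((θ:ℂ) * Complex.I))‖ *
        ‖f (Complex.exp ((θ:ℂ) * Complex.I)) - r (Complex.exp ((θ:ℂ) * Complex.I))‖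
      ≤ 1 * ‖f (Complex.exp ((θ:ℂ) * Complex.I)) - r (Complex.exp ((θ:ℂ) * Complex.I))‖ :=
        mul_le_mul_of_nonneg_right (hb1 _ hwabs) (norm_nonneg _)
    _ = _ := one_mul _
end
end

section
/- If (b_k) is a sequence of points in the closed unit disk converging to b ∈ closed unit disk, then ∫₀^{2π} |log|1 − e^{iθ} b_k|| dθ converges to ∫₀^{2π} |log|1 − e^{iθ} b|| dθ. -/
open Complex Real Filter

open MeasureTheory intervalIntegral Set Function Topology
open scoped Interval

lemma lb18 (r u : ℝ) : |Real.sin u| ≤ ‖1 - (r : ℂ) * Complex.exp (u * I)‖ := by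
  rw [← Real.sqrt_sq_eq_abs, Complex.norm_def]
  apply Real.sqrt_le_sqrt
  have h1 : ((1 : ℂ) - (r : ℂ) * Complex.exp (u * I)).re = 1 - r * Real.cos u := by
    simp [Complex.exp_ofReal_mul_I_re]
  have h2 : ((1 : ℂ) - (r : ℂ) * Complex.exp (u * I)).im = -(r * Real.sin u) := by
    simp [Complex.exp_ofReal_mul_I_im]
  rw [Complex.normSq_apply, h1, h2]
  nlinarith [Real.sin_sq_add_cos_sq u, sq_nonneg (Real.cos u - r)]

lemma ub18 {z : ℂ} (hz : ‖z‖ ≤ 1) : ‖1 - z‖ ≤ 2 := by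
  calc ‖1 - z‖ ≤ ‖(1:ℂ)‖ + ‖z‖ := by
        simpa [sub_eq_add_neg] using norm_add_le 1 (-z)
    _ ≤ 2 := by simp; linarith

lemma maxlog18 {x : ℝ} (hx : 0 ≤ x) : max (Real.log x) 0 = Real.log (max x 1) := by
  rcases le_or_gt x 1 with h | h
  · rw [max_eq_right h, Real.log_one, max_eq_right]
    rcases eq_or_lt_of_le hx with rfl | hx'
    · simp
    · exact Real.log_nonpos hx h  -- check signature
  · rw [max_eq_left h.le, max_eq_left]
    exact le_of_lt (Real.log_pos h)

lemma log_bound18 {x : ℝ} (hx : 0 < x) (hx2 : x ≤ π / 2) : |Real.log x| ≤ 2 * x ^ (-(1/2) : ℝ) := by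
  have hrp : 0 < x ^ (-(1/2) : ℝ) := Real.rpow_pos_of_pos hx _
  have hlog : Real.log (x ^ (-(1/2) : ℝ)) = -(1/2) * Real.log x := Real.log_rpow hx _
  have hle : Real.log (x ^ (-(1/2) : ℝ)) ≤ x ^ (-(1/2) : ℝ) - 1 := Real.log_le_sub_one_of_pos hrp
  rcases le_or_gt x 1 with h | h
  · have : Real.log x ≤ 0 := Real.log_nonpos hx.le h
    rw [abs_of_nonpos this]
    nlinarith
  · have hl0 : 0 ≤ Real.log x := Real.log_nonneg h.le
    rw [_root_.abs_of_nonneg hl0]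
    have h4 : x < 4 := by nlinarith [Real.pi_lt_d2]
    have : Real.log x ≤ x - 1 := Real.log_le_sub_one_of_pos hx
    have hxr : (1:ℝ) ≤ 2 * x ^ (-(1/2) : ℝ) := by
      have : (4:ℝ) ^ (-(1/2) : ℝ) ≤ x ^ (-(1/2) : ℝ) := by
        apply Real.rpow_le_rpow_of_nonpos hx h4.le (by norm_num)
      have h4v : (4:ℝ) ^ (-(1/2) : ℝ) = 1/2 := by
        rw [Real.rpow_neg (by norm_num), show (4:ℝ) = 2^(2:ℕ) by norm_num]
        rw [← Real.rpow_natCast (2:ℝ) 2, ← Real.rpow_mul (by norm_num)]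
        norm_num
      linarith
    nlinarith [Real.pi_lt_d2]

lemma log_int18 : IntervalIntegrable Real.log volume 0 (π / 2) := by
  have hb : IntervalIntegrable (fun x : ℝ => 2 * x ^ (-(1/2) : ℝ)) volume 0 (π / 2) :=
    (intervalIntegral.intervalIntegrable_rpow' (by norm_num)).const_mul 2
  rw [intervalIntegrable_iff] at hb ⊢
  apply MeasureTheory.Integrable.mono' hb Real.measurable_log.aestronglyMeasurable
  rw [ae_restrict_iff' measurableSet_uIoc]
  refine Eventually.of_forall fun x hx => ?_
  rw [Set.uIoc_of_le (by positivity)] at hx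
  simpa using log_bound18 hx.1 hx.2

lemma logabs_int18 : IntervalIntegrable (fun x : ℝ => Real.log |x|) volume (-(π/2)) (π/2) := by
  have h0 : IntervalIntegrable (fun x : ℝ => Real.log |x|) volume 0 (π/2) := by
    have : IntervalIntegrable Real.log volume 0 (π / 2) := log_int18
    exact this.congr (fun x _ => (Real.log_abs x).symm) -- check congr exists
  have h1 : IntervalIntegrable (fun x : ℝ => Real.log |x|) volume (-(π/2)) 0 := by
    have := ((IntervalIntegrable.iff_comp_neg (f := fun x : ℝ => Real.log |x|) (by simp)).mp h0)
    simpa using this.symm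
  exact h1.trans h0

lemma abs_sin18 (x : ℝ) (hx : |x| ≤ π) : |Real.sin x| = Real.sin |x| := by
  rcases le_or_gt 0 x with h | h
  · rw [_root_.abs_of_nonneg h,
      _root_.abs_of_nonneg (Real.sin_nonneg_of_nonneg_of_le_pi h (by rwa [_root_.abs_of_nonneg h] at hx))]
  · rw [_root_.abs_of_neg h, Real.sin_neg]
    have hs : Real.sin x ≤ 0 := Real.sin_nonpos_of_nonpos_of_neg_pi_le h.le
      (by rw [_root_.abs_of_neg h] at hx; linarith)
    rw [_root_.abs_of_nonpos hs]

lemma g_bound18 {x : ℝ} (hx : x ≠ 0) (hx2 : |x| ≤ π/2) :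
    |Real.log (|Real.sin x|) - Real.log (|x|)| ≤ Real.log (π/2) := by
  have hy : 0 < |x| := abs_pos.mpr hx
  have hsin : |Real.sin x| = Real.sin |x| := abs_sin18 x (by nlinarith [Real.pi_pos])
  have hup : Real.sin |x| ≤ |x| := Real.sin_le hy.le
  have hlo : 2/π * |x| ≤ Real.sin |x| := Real.mul_le_sin hy.le hx2
  have hsp : 0 < Real.sin |x| := lt_of_lt_of_le (by positivity) hlo
  have h1 : Real.log (Real.sin |x|) ≤ Real.log |x| := Real.log_le_log hsp hup
  have h2 : Real.log (2/π) + Real.log |x| ≤ Real.log (Real.sin |x|) := by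
    rw [← Real.log_mul (by positivity) hy.ne']
    exact Real.log_le_log (by positivity) hlo
  have h3 : Real.log (2/π) = - Real.log (π/2) := by
    rw [← Real.log_inv]; norm_num
  rw [hsin, abs_le]
  constructor <;> nlinarith [Real.log_nonneg (show (1:ℝ) ≤ π/2 by nlinarith [Real.pi_gt_three])]

lemma logsin_int_base18 :
    IntervalIntegrable (fun x : ℝ => Real.log |Real.sin x|) volume (-(π/2)) (π/2) := by
  have hg : IntervalIntegrable (fun x : ℝ => Real.log |Real.sin x| - Real.log |x|)
      volume (-(π/2)) (π/2) := by
    have hb : IntervalIntegrable (fun _ : ℝ => Real.log (π/2)) volume (-(π/2)) (π/2) :=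
      intervalIntegrable_const
    rw [intervalIntegrable_iff] at hb ⊢
    apply MeasureTheory.Integrable.mono' hb
    · apply AEStronglyMeasurable.sub
      · exact ((Real.measurable_log.comp (measurable_abs.comp Real.measurable_sin))).aestronglyMeasurable
      · exact (Real.measurable_log.comp measurable_abs).aestronglyMeasurable
    · have hnull : ∀ᵐ x : ℝ ∂(volume.restrict (Ι (-(π/2)) (π/2))), x ≠ 0 :=
        ae_restrict_of_ae (ae_iff.mpr (by simp))
      filter_upwards [hnull, ae_restrict_mem measurableSet_uIoc] with x hx hmem
      have hx2 : |x| ≤ π/2 := by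
        rw [Set.uIoc_of_le (by linarith [Real.pi_pos])] at hmem
        rw [abs_le]; exact ⟨hmem.1.le, hmem.2⟩
      simpa using g_bound18 hx hx2
  have := hg.add logabs_int18
  apply this.congr
  exact fun x _ => by ring

lemma periodic_int18 {f : ℝ → ℝ} {T c : ℝ} (hT : 0 < T) (hp : Periodic f T)
    (h0 : IntervalIntegrable f volume c (c + T)) (a b : ℝ) :
    IntervalIntegrable f volume a b := by
  have step : ∀ m : ℤ, IntervalIntegrable f volume (c + m * T) (c + (m + 1) * T) := by
    intro m
    have h2 := h0.comp_sub_right ((m : ℝ) * T)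
    have he : (fun x => f (x - (m : ℝ) * T)) = f := funext fun x => hp.sub_int_mul_eq m
    rw [he] at h2
    have e1 : c + (m : ℝ) * T = c + (m : ℝ) * T := rfl
    have e2 : c + T + (m : ℝ) * T = c + ((m : ℝ) + 1) * T := by ring
    rwa [e2] at h2
  have chain : ∀ (n : ℕ) (m : ℤ), IntervalIntegrable f volume (c + m * T) (c + (m + n) * T) := by
    intro n
    induction n with
    | zero => intro m; simp
    | succ k ih =>
      intro m
      refine (ih m).trans ?_
      have := step (m + k)
      convert this using 2 <;> push_cast <;> ring
  set s := min a b
  set t := max a b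
  set m : ℤ := ⌊(s - c) / T⌋ with hm
  have hms : c + (m : ℝ) * T ≤ s := by
    have h1 : (m : ℝ) ≤ (s - c) / T := Int.floor_le ((s - c) / T)
    have h2 : (m : ℝ) * T ≤ s - c := by
      rw [← le_div_iff₀ hT]; exact h1
    linarith
  obtain ⟨n, hn⟩ := exists_nat_ge ((t - c) / T - m)
  have hnt : t ≤ c + ((m : ℝ) + n) * T := by
    have h1 : (t - c) / T ≤ (m : ℝ) + n := by linarith
    have h2 : t - c ≤ ((m : ℝ) + n) * T := (div_le_iff₀ hT).mp h1
    linarith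
  apply (chain n m).mono_set
  have hst : s ≤ t := min_le_max
  have hlo : c + (m : ℝ) * T ≤ c + ((m : ℝ) + n) * T := by nlinarith
  rw [Set.uIcc_of_le hlo]
  exact Set.uIcc_subset_Icc (by constructor <;> [linarith [min_le_left a b]; linarith [le_max_left a b] ])
    (by constructor <;> [linarith [min_le_right a b]; linarith [le_max_right a b] ])

lemma logsin_int18 (a b : ℝ) :
    IntervalIntegrable (fun x : ℝ => Real.log |Real.sin x|) volume a b := by
  apply periodic_int18 Real.pi_pos (fun x => by simp [Real.sin_antiperiodic x]) (c := -(π/2))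
  · have : -(π/2) + π = π/2 := by ring
    rw [this]
    exact logsin_int_base18

lemma bound_int18 (φ a b : ℝ) :
    IntervalIntegrable (fun θ : ℝ => Real.log 2 + |Real.log (|Real.sin (θ + φ)|)|) volume a b := by
  apply intervalIntegrable_const.add
  have := ((logsin_int18 (a + φ) (b + φ)).comp_add_right φ).abs
  simpa using this

lemma ae_sin_ne18 (φ : ℝ) : ∀ᵐ θ : ℝ, Real.sin (θ + φ) ≠ 0 := by
  rw [ae_iff]
  refine measure_mono_null (fun θ hθ => ?_)
    (measure_iUnion_null (s := fun n : ℤ => {(n : ℝ) * π - φ}) fun n => measure_singleton _)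
  simp only [Set.mem_setOf_eq, not_not] at hθ
  obtain ⟨n, hn⟩ := Real.sin_eq_zero_iff.mp hθ
  simp only [Set.mem_iUnion, Set.mem_singleton_iff]
  exact ⟨n, by linarith⟩

lemma sandwich18 {c : ℂ} (hc : ‖c‖ ≤ 1) {r : ℝ} (hr0 : 0 ≤ r) (hr1 : r ≤ 1) (θ : ℝ)
    (hs : Real.sin (θ + Complex.arg c) ≠ 0) :
    |Real.log (‖1 - Complex.exp ((θ:ℂ) * I) * ((r:ℂ) * c)‖)| ≤
      Real.log 2 + |Real.log (|Real.sin (θ + Complex.arg c)|)| := by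
  set u := θ + Complex.arg c with hu
  have hrw : Complex.exp ((θ:ℂ) * I) * ((r:ℂ) * c)
      = ((r * ‖c‖ : ℝ) : ℂ) * Complex.exp ((u:ℂ) * I) := by
    conv_lhs => rw [← Complex.norm_mul_exp_arg_mul_I c]
    rw [hu]
    push_cast
    rw [add_mul, Complex.exp_add]
    ring
  rw [hrw]
  set A := ‖1 - ((r * ‖c‖ : ℝ) : ℂ) * Complex.exp ((u:ℂ) * I)‖ with hA
  have hlb : |Real.sin u| ≤ A := lb18 (r * ‖c‖) u
  have hub : A ≤ 2 := by
    apply ub18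
    rw [norm_mul, Complex.norm_exp_ofReal_mul_I, mul_one, Complex.norm_real, Real.norm_eq_abs]
    rw [_root_.abs_of_nonneg (by positivity)]
    nlinarith [norm_nonneg c]
  have hsp : 0 < |Real.sin u| := abs_pos.mpr hs
  have hA0 : 0 < A := lt_of_lt_of_le hsp hlb
  have hlog2 : (0:ℝ) ≤ Real.log 2 := Real.log_nonneg (by norm_num)
  rcases le_or_gt 1 A with h | h
  · rw [_root_.abs_of_nonneg (Real.log_nonneg h)]
    have : Real.log A ≤ Real.log 2 := Real.log_le_log hA0 hub
    have := abs_nonneg (Real.log (|Real.sin u|))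
    linarith
  · rw [_root_.abs_of_nonpos (Real.log_nonpos hA0.le h.le)]
    have h1 : Real.log (|Real.sin u|) ≤ Real.log A := Real.log_le_log hsp hlb
    have h2 : -Real.log (|Real.sin u|) ≤ |Real.log (|Real.sin u|)| := neg_le_abs _
    linarith

lemma L_meas18 (c : ℂ) (a b : ℝ) :
    AEStronglyMeasurable (fun θ : ℝ => Real.log (‖1 - Complex.exp ((θ:ℂ) * I) * c‖))
      (volume.restrict (Ι a b)) := by
  have hcont : Continuous fun θ : ℝ => ‖1 - Complex.exp ((θ:ℂ) * I) * c‖ := by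
    apply continuous_norm.comp
    exact continuous_const.sub ((Complex.continuous_exp.comp
      ((Complex.continuous_ofReal).mul continuous_const)).mul continuous_const)
  exact (Real.measurable_log.comp hcont.measurable).aestronglyMeasurable

lemma L_int18 {c : ℂ} (hc : ‖c‖ ≤ 1) (a b : ℝ) :
    IntervalIntegrable (fun θ : ℝ => Real.log (‖1 - Complex.exp ((θ:ℂ) * I) * c‖))
      volume a b := by
  have hb := bound_int18 (Complex.arg c) a b
  rw [intervalIntegrable_iff] at hb ⊢
  apply Integrable.mono' hb (L_meas18 c a b)
  filter_upwards [ae_restrict_of_ae (ae_sin_ne18 (Complex.arg c))] with θ hθ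
  have := sandwich18 hc zero_le_one le_rfl θ hθ
  rw [Real.norm_eq_abs]
  simpa using this

lemma zero_lt18 {c : ℂ} (hc : ‖c‖ < 1) :
    ∫ θ in (0:ℝ)..(2*π), Real.log (‖1 - Complex.exp ((θ:ℂ) * I) * c‖) = 0 := by
  set f : ℂ → ℂ := fun z => Complex.log (1 - z * c) with hf
  have hslit : ∀ z ∈ Metric.closedBall (0:ℂ) 1, (1 - z * c) ∈ Complex.slitPlane := by
    intro z hz
    rw [Metric.mem_closedBall, dist_zero_right] at hz
    rw [Complex.mem_slitPlane_iff]
    left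
    have h1 : ‖z * c‖ < 1 := by
      rw [norm_mul]
      rcases eq_or_lt_of_le (norm_nonneg z) with h | h
      · rw [← h]; simpa using one_pos
      · calc ‖z‖ * ‖c‖ ≤ 1 * ‖c‖ := by
              apply mul_le_mul_of_nonneg_right _ (norm_nonneg c)
              exact hz
          _ < 1 := by simpa using hc
    have h2 : (z * c).re ≤ ‖z * c‖ := Complex.re_le_norm _
    simp only [Complex.sub_re, Complex.one_re]
    linarith
  have hdiff : DiffContOnCl ℂ f (Metric.ball (0:ℂ) 1) := by
    apply DifferentiableOn.diffContOnCl
    rw [closure_ball (0:ℂ) one_ne_zero]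
    intro z hz
    have : DifferentiableAt ℂ f z := by
      apply DifferentiableAt.clog
      · exact (differentiableAt_id.mul_const c).const_sub 1
      · exact hslit z hz
    exact this.differentiableWithinAt
  have hcauchy := hdiff.circleIntegral_sub_inv_smul (w := 0) (Metric.mem_ball_self one_pos)
  have hf0 : f 0 = 0 := by simp [hf]
  rw [hf0, smul_zero] at hcauchy
  -- unfold circle integral
  rw [circleIntegral] at hcauchy
  simp only [deriv_circleMap, circleMap, Complex.ofReal_one, Complex.ofReal_zero, zero_add,
    one_mul, sub_zero, smul_eq_mul] at hcauchy
  have heq : ∀ θ : ℝ, (Complex.exp ((θ:ℂ) * I) * I) * ((Complex.exp ((θ:ℂ) * I))⁻¹ * f (Complex.exp ((θ:ℂ) * I)))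
      = I * f (Complex.exp ((θ:ℂ) * I)) := by
    intro θ
    field_simp [Complex.exp_ne_zero]
  rw [intervalIntegral.integral_congr (g := fun θ : ℝ => I * f (Complex.exp ((θ:ℂ) * I)))
    (fun θ _ => heq θ)] at hcauchy
  rw [intervalIntegral.integral_const_mul] at hcauchy
  have hint : ∫ θ in (0:ℝ)..(2*π), f (Complex.exp ((θ:ℂ) * I)) = 0 := by
    rcases mul_eq_zero.mp hcauchy with h | h
    · exact absurd h Complex.I_ne_zero
    · exact h
  -- take real parts
  have hcont : Continuous fun θ : ℝ => f (Complex.exp ((θ:ℂ) * I)) := by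
    apply continuous_iff_continuousAt.mpr
    intro θ
    apply ContinuousAt.clog
    · exact (continuous_const.sub ((Complex.continuous_exp.comp
        (Complex.continuous_ofReal.mul continuous_const)).mul continuous_const)).continuousAt
    · apply hslit
      simp [Metric.mem_closedBall, Complex.norm_exp_ofReal_mul_I]
  have := Complex.reCLM.intervalIntegral_comp_comm (hcont.intervalIntegrable (μ := volume) 0 (2*π))
  rw [hint] at this
  simp only [Complex.reCLM_apply, map_zero] at this
  refine Eq.trans (intervalIntegral.integral_congr (g := fun x : ℝ => (f (Complex.exp ((x:ℂ) * I))).re)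
    (fun θ _ => by simp [hf, Complex.log_re])) this

lemma rot18 (c : ℂ) (θ : ℝ) : Complex.exp ((θ:ℂ) * I) * c
    = ((‖c‖ : ℝ) : ℂ) * Complex.exp (((θ + Complex.arg c : ℝ) : ℂ) * I) := by
  conv_lhs => rw [← Complex.norm_mul_exp_arg_mul_I c]
  push_cast
  rw [add_mul, Complex.exp_add]
  ring

lemma zero_le18 {c : ℂ} (hc : ‖c‖ ≤ 1) :
    ∫ θ in (0:ℝ)..(2*π), Real.log (‖1 - Complex.exp ((θ:ℂ) * I) * c‖) = 0 := by
  set r : ℕ → ℝ := fun k => 1 - ((k:ℝ) + 1)⁻¹ with hrdef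
  have hr0 : ∀ k, 0 ≤ r k := by
    intro k
    have : ((k:ℝ) + 1)⁻¹ ≤ 1 := by
      rw [inv_le_one_iff₀]; right; linarith [Nat.cast_nonneg (α := ℝ) k]
    simp [hrdef]; linarith
  have hr1 : ∀ k, r k < 1 := by
    intro k
    have : (0:ℝ) < ((k:ℝ) + 1)⁻¹ := by positivity
    simp [hrdef]; linarith
  have htend : Tendsto r atTop (𝓝 1) := by
    have h1 : Tendsto (fun k : ℕ => ((k:ℝ) + 1)⁻¹) atTop (𝓝 0) := by
      simpa using tendsto_one_div_add_atTop_nhds_zero_nat (𝕜 := ℝ)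
    simpa using tendsto_const_nhds.sub h1
  have hDCT := intervalIntegral.tendsto_integral_filter_of_dominated_convergence
    (μ := volume) (a := 0) (b := 2*π) (l := atTop)
    (F := fun (k : ℕ) (θ : ℝ) => Real.log (‖1 - Complex.exp ((θ:ℂ) * I) * (((r k : ℝ):ℂ) * c)‖))
    (f := fun θ : ℝ => Real.log (‖1 - Complex.exp ((θ:ℂ) * I) * c‖))
    (fun θ => Real.log 2 + |Real.log (|Real.sin (θ + Complex.arg c)|)|)
    (Eventually.of_forall fun k => L_meas18 _ _ _)
    (Eventually.of_forall fun k => (ae_sin_ne18 (Complex.arg c)).mono fun θ hθ _ => by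
      rw [Real.norm_eq_abs]
      exact sandwich18 hc (hr0 k) (hr1 k).le θ hθ)
    (bound_int18 (Complex.arg c) 0 (2*π))
    ((ae_sin_ne18 (Complex.arg c)).mono fun θ hθ _ => by
      have hne : (1 : ℂ) - Complex.exp ((θ:ℂ) * I) * c ≠ 0 := by
        intro h
        have h1 : Complex.exp ((θ:ℂ) * I) * c = 1 := by
          have := sub_eq_zero.mp h; exact this.symm
        rw [rot18] at h1
        have him := congrArg Complex.im h1
        simp only [Complex.mul_im, Complex.ofReal_re, Complex.ofReal_im,
          Complex.exp_ofReal_mul_I_im, Complex.exp_ofReal_mul_I_re, Complex.one_im,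
          zero_mul, add_zero] at him
        have habs : ‖c‖ ≠ 0 := by
          intro h0
          rw [h0] at h1
          simp at h1
        exact hθ (by
          have := mul_eq_zero.mp (by linarith [him] : ‖c‖ * Real.sin (θ + Complex.arg c) = 0)
          tauto)
      have hcontAt : ContinuousAt
          (fun x : ℝ => Real.log (‖1 - Complex.exp ((θ:ℂ) * I) * (((x:ℝ):ℂ) * c)‖)) 1 := by
        apply ContinuousAt.log
        · apply Continuous.continuousAt
          apply continuous_norm.comp
          exact continuous_const.sub (continuous_const.mul (Complex.continuous_ofReal.mul continuous_const))
        · simp only [ne_eq, norm_eq_zero, Complex.ofReal_one, one_mul]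
          exact hne
      have := hcontAt.tendsto.comp htend
      simpa [Function.comp_def] using this)
  have hzero : ∀ k, (∫ θ in (0:ℝ)..(2*π),
      Real.log (‖1 - Complex.exp ((θ:ℂ) * I) * (((r k : ℝ):ℂ) * c)‖)) = 0 := by
    intro k
    apply zero_lt18
    rw [norm_mul, Complex.norm_real, Real.norm_eq_abs, _root_.abs_of_nonneg (hr0 k)]
    calc r k * ‖c‖ ≤ r k * 1 := by
          apply mul_le_mul_of_nonneg_left hc (hr0 k)
      _ < 1 := by rw [mul_one]; exact hr1 k
  rw [funext hzero] at hDCT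
  exact tendsto_nhds_unique hDCT tendsto_const_nhds

lemma M_cont18 (c : ℂ) :
    Continuous fun θ : ℝ => Real.log (max (‖1 - Complex.exp ((θ:ℂ) * I) * c‖) 1) := by
  rw [continuous_iff_continuousAt]
  intro θ
  apply ContinuousAt.log
  · apply Continuous.continuousAt
    apply Continuous.max _ continuous_const
    apply continuous_norm.comp
    exact continuous_const.sub ((Complex.continuous_exp.comp
      (Complex.continuous_ofReal.mul continuous_const)).mul continuous_const)
  · have : (1:ℝ) ≤ max (‖1 - Complex.exp ((θ:ℂ) * I) * c‖) 1 := le_max_right _ _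
    linarith

lemma key18 {c : ℂ} (hc : ‖c‖ ≤ 1) :
    (∫ θ in (0:ℝ)..(2*π), |Real.log (‖1 - Complex.exp ((θ:ℂ) * Complex.I) * c‖)|)
      = 2 * ∫ θ in (0:ℝ)..(2*π),
          Real.log (max (‖1 - Complex.exp ((θ:ℂ) * I) * c‖) 1) := by
  have hL := L_int18 hc 0 (2*π)
  have hM : IntervalIntegrable
      (fun θ : ℝ => Real.log (max (‖1 - Complex.exp ((θ:ℂ) * I) * c‖) 1))
      volume 0 (2*π) := (M_cont18 c).intervalIntegrable 0 (2*π)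
  have heq : ∀ θ : ℝ, |Real.log (‖1 - Complex.exp ((θ:ℂ) * I) * c‖)|
      = 2 * Real.log (max (‖1 - Complex.exp ((θ:ℂ) * I) * c‖) 1)
        - Real.log (‖1 - Complex.exp ((θ:ℂ) * I) * c‖) := by
    intro θ
    rw [← maxlog18 (norm_nonneg _)]
    rcases le_total 0 (Real.log (‖1 - Complex.exp ((θ:ℂ) * I) * c‖)) with h | h
    · rw [_root_.abs_of_nonneg h, max_eq_left h]; ring
    · rw [_root_.abs_of_nonpos h, max_eq_right h]; ring
  rw [intervalIntegral.integral_congr (fun θ _ => heq θ),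
    intervalIntegral.integral_sub (hM.const_mul 2) hL,
    intervalIntegral.integral_const_mul, zero_le18 hc, sub_zero]

/-- If (b_k) is a sequence in the closed unit disk converging to b, then
∫₀^{2π} |log |1 − e^{iθ} b_k|| dθ converges to ∫₀^{2π} |log |1 − e^{iθ} b|| dθ. -/
theorem stmt18 (b : ℂ) (bk : ℕ → ℂ) (hb : ‖b‖ ≤ 1)
    (hbk : ∀ k, ‖bk k‖ ≤ 1) (hconv : Tendsto bk atTop (nhds b)) :
    Tendsto
      (fun k => ∫ θ in (0 : ℝ)..(2 * π),
        |Real.log ‖1 - Complex.exp ((θ : ℂ) * Complex.I) * bk k‖|)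
      atTop
      (nhds (∫ θ in (0 : ℝ)..(2 * π),
        |Real.log ‖1 - Complex.exp ((θ : ℂ) * Complex.I) * b‖|)) := by
  have h2 : Tendsto (fun k => ∫ θ in (0:ℝ)..(2*π),
      Real.log (max (‖1 - Complex.exp ((θ:ℂ) * I) * bk k‖) 1)) atTop
      (𝓝 (∫ θ in (0:ℝ)..(2*π),
        Real.log (max (‖1 - Complex.exp ((θ:ℂ) * I) * b‖) 1))) := by
    apply intervalIntegral.tendsto_integral_filter_of_dominated_convergence
      (bound := fun _ : ℝ => Real.log 2)
    · exact Eventually.of_forall fun k => ((M_cont18 (bk k)).aestronglyMeasurable)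
    · refine Eventually.of_forall fun k => Eventually.of_forall fun θ _ => ?_
      rw [Real.norm_eq_abs,
        _root_.abs_of_nonneg (Real.log_nonneg (le_max_right _ 1))]
      apply Real.log_le_log (by linarith [le_max_right (‖1 - Complex.exp ((θ:ℂ) * I) * bk k‖) (1:ℝ)])
      exact max_le (ub18 (by
        rw [norm_mul, Complex.norm_exp_ofReal_mul_I, one_mul]; exact hbk k)) one_le_two
    · exact intervalIntegrable_const
    · refine Eventually.of_forall fun θ _ => ?_
      have hcontAt : ContinuousAt
          (fun z : ℂ => Real.log (max (‖1 - Complex.exp ((θ:ℂ) * I) * z‖) 1)) b := by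
        apply ContinuousAt.log
        · apply Continuous.continuousAt
          apply Continuous.max _ continuous_const
          exact continuous_norm.comp (continuous_const.sub (continuous_const.mul continuous_id))
        · have : (1:ℝ) ≤ max (‖1 - Complex.exp ((θ:ℂ) * I) * b‖) 1 := le_max_right _ _
          linarith
      exact hcontAt.tendsto.comp hconv
  have hfun : (fun k => ∫ θ in (0 : ℝ)..(2 * π),
      |Real.log (‖1 - Complex.exp ((θ : ℂ) * Complex.I) * bk k‖)|)
      = fun k => 2 * ∫ θ in (0:ℝ)..(2*π),
        Real.log (max (‖1 - Complex.exp ((θ:ℂ) * I) * bk k‖) 1) :=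
    funext fun k => key18 (hbk k)
  rw [hfun, key18 hb]
  exact h2.const_mul 2
end
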